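/- arXiv:1208.1040 — 2 statements merged into one kernel-verified Lean document; each statement's English description precedes it below -/
import Mathlib

section
/- Let H be a two-dimensional real inner product space, J : H → H a linear isometry satisfying J ∘ J = -id, and A a symmetric bilinear form on H satisfying A(JX, JY) = -A(X, Y) for all X, Y ∈ H. If v ∈ H is a nonzero vector with A(v, v) = 0, then for every orthonormal basis (e₁, e₂) of H one has ‖v‖⁴ · ( Σ_{i,j=1}^{2} A(eᵢ, eⱼ)² ) = 2 · ( A(v, Jv) )². -/
open scoped RealInnerProductSpace

/-- On a two-dimensional real inner product space `H` with a compatible complex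
structure `J` and a symmetric bilinear form `A` of type (2,0)+(0,2), if `v ≠ 0`
and `A(v,v) = 0` then `‖v‖⁴ |A|² = 2 (A(v, Jv))²`, where
`|A|² = Σ_{i,j} A(eᵢ, eⱼ)²` for any orthonormal basis `(e₁, e₂)`. -/
theorem stmt4 {H : Type*} [NormedAddCommGroup H] [InnerProductSpace ℝ H]
    (hdim : Module.finrank ℝ H = 2)
    (J : H →ₗ[ℝ] H) (hJiso : ∀ x : H, ‖J x‖ = ‖x‖) (hJJ : ∀ x : H, J (J x) = -x)
    (A : H →ₗ[ℝ] H →ₗ[ℝ] ℝ) (hAsym : ∀ X Y : H, A X Y = A Y X)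
    (hAJ : ∀ X Y : H, A (J X) (J Y) = - A X Y)
    (v : H) (hv : v ≠ 0) (hAv : A v v = 0)
    (b : OrthonormalBasis (Fin 2) ℝ H) :
    ‖v‖ ^ 4 * (∑ i : Fin 2, ∑ j : Fin 2, (A (b i) (b j)) ^ 2) =
      2 * (A v (J v)) ^ 2 := by
  have hJinner : ∀ x y : H, ⟪J x, J y⟫ = ⟪x, y⟫ := by
    intro x y
    rw [real_inner_eq_norm_add_mul_self_sub_norm_mul_self_sub_norm_mul_self_div_two,
        real_inner_eq_norm_add_mul_self_sub_norm_mul_self_sub_norm_mul_self_div_two x y,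
        ← map_add, hJiso, hJiso, hJiso]
  have hn : (0:ℝ) < ‖v‖ := norm_pos_iff.mpr hv
  set n : ℝ := ‖v‖ with hn'
  -- the special orthonormal pair
  set e : Fin 2 → H := ![n⁻¹ • v, n⁻¹ • J v] with he
  have hvJv : ⟪v, J v⟫ = 0 := by
    have := hJinner v (J v)
    rw [hJJ, inner_neg_right, real_inner_comm] at this
    linarith
  have hvv : ⟪v, v⟫ = n * n := by
    rw [hn', real_inner_self_eq_norm_mul_norm]
  have hJvJv : ⟪J v, J v⟫ = n * n := by rw [hJinner]; exact hvv
  have hnn : n ≠ 0 := ne_of_gt hn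
  have hvJv' : ⟪J v, v⟫ = 0 := by rw [real_inner_comm]; exact hvJv
  have hfd : FiniteDimensional ℝ H := Module.finite_of_finrank_eq_succ hdim
  have horth : Orthonormal ℝ e := by
    rw [orthonormal_iff_ite]
    intro i j
    fin_cases i <;> fin_cases j <;>
      simp [he, inner_smul_left, inner_smul_right, hvv, hJvJv, hvJv, hvJv'] <;>
      (try field_simp) <;>
      (left; simp only [norm_smul, hJiso, norm_div, norm_one, Real.norm_eq_abs, abs_of_pos hn, ← hn']; field_simp)
  obtain ⟨E, hE⟩ := Orthonormal.exists_orthonormalBasis_extension_of_card_eq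
      (𝕜 := ℝ) (v := e) (s := Set.univ) (by simp [hdim]) (horth.comp _ Subtype.val_injective)
  have hE0 : E 0 = n⁻¹ • v := by simpa [he] using hE 0 (Set.mem_univ 0)
  have hE1 : E 1 = n⁻¹ • J v := by simpa [he] using hE 1 (Set.mem_univ 1)
  -- A values on the pair
  set β : ℝ := A v (J v) with hβ
  have hA00 : A (E 0) (E 0) = 0 := by simp [hE0, hAv]
  have hA11 : A (E 1) (E 1) = 0 := by
    have := hAJ v v
    rw [hAv] at this
    simp [hE1, this]
  have hA01 : A (E 0) (E 1) = n⁻¹ * n⁻¹ * β := by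
    simp [hE0, hE1, hβ]; ring
  have hA10 : A (E 1) (E 0) = n⁻¹ * n⁻¹ * β := by
    rw [hAsym]; exact hA01
  -- coordinates
  set x : Fin 2 → ℝ := fun i => ⟪E 0, b i⟫ with hx
  set y : Fin 2 → ℝ := fun i => ⟪E 1, b i⟫ with hy
  have hexp : ∀ i : Fin 2, b i = x i • E 0 + y i • E 1 := by
    intro i
    have := E.sum_repr' (b i)
    rw [Fin.sum_univ_two] at this
    exact this.symm
  have hAbb : ∀ i j : Fin 2, A (b i) (b j) = n⁻¹ * n⁻¹ * β * (x i * y j + y i * x j) := by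
    intro i j
    rw [hexp i, hexp j]
    simp [map_add, map_smul, hA00, hA11, hA01, hA10]
    ring
  -- Parseval
  have hpar : ∀ z w : H, ∑ i : Fin 2, ⟪z, b i⟫ * ⟪w, b i⟫ = ⟪z, w⟫ := by
    intro z w
    have := b.sum_inner_mul_inner z w
    simp only [real_inner_comm w] at this ⊢
    exact this
  have hxx : x 0 ^ 2 + x 1 ^ 2 = 1 := by
    have := hpar (E 0) (E 0)
    rw [Fin.sum_univ_two] at this
    have h1 : ⟪E 0, E 0⟫ = (1:ℝ) := by
      rw [real_inner_self_eq_norm_mul_norm, E.orthonormal.1 0]; norm_num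
    rw [h1] at this
    simpa [hx, sq] using this
  have hyy : y 0 ^ 2 + y 1 ^ 2 = 1 := by
    have := hpar (E 1) (E 1)
    rw [Fin.sum_univ_two] at this
    have h1 : ⟪E 1, E 1⟫ = (1:ℝ) := by
      rw [real_inner_self_eq_norm_mul_norm, E.orthonormal.1 1]; norm_num
    rw [h1] at this
    simpa [hy, sq] using this
  have hxy : x 0 * y 0 + x 1 * y 1 = 0 := by
    have := hpar (E 0) (E 1)
    rw [Fin.sum_univ_two] at this
    have h1 : ⟪E 0, E 1⟫ = (0:ℝ) := E.orthonormal.2 (by decide)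
    rw [h1] at this
    simpa [hx, hy] using this
  rw [Fin.sum_univ_two, Fin.sum_univ_two, Fin.sum_univ_two]
  rw [hAbb 0 0, hAbb 0 1, hAbb 1 0, hAbb 1 1]
  have key : (x 0 * y 0 + y 0 * x 0)^2 + (x 0 * y 1 + y 0 * x 1)^2
      + ((x 1 * y 0 + y 1 * x 0)^2 + (x 1 * y 1 + y 1 * x 1)^2)
      = 2 * ((x 0 ^2 + x 1 ^2) * (y 0 ^2 + y 1 ^2) + (x 0 * y 0 + x 1 * y 1)^2) := by
    ring
  have : n ^ 4 * ((n⁻¹ * n⁻¹ * β * (x 0 * y 0 + y 0 * x 0)) ^ 2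
      + (n⁻¹ * n⁻¹ * β * (x 0 * y 1 + y 0 * x 1)) ^ 2
      + ((n⁻¹ * n⁻¹ * β * (x 1 * y 0 + y 1 * x 0)) ^ 2
      + (n⁻¹ * n⁻¹ * β * (x 1 * y 1 + y 1 * x 1)) ^ 2))
      = β ^ 2 * ((x 0 * y 0 + y 0 * x 0)^2 + (x 0 * y 1 + y 0 * x 1)^2
      + ((x 1 * y 0 + y 1 * x 0)^2 + (x 1 * y 1 + y 1 * x 1)^2)) := by
    field_simp
  rw [this, key, hxx, hyy, hxy]
  ring
end

section
/- Let H be a two-dimensional real inner product space, J : H → H a linear isometry satisfying J ∘ J = -id, and A a symmetric bilinear form on H satisfying A(JX, JY) = -A(X, Y) for all X, Y ∈ H. If v ∈ H is a nonzero vector with A(v, v) = 0 and A(v, Jv) ≤ 0, then for every orthonormal basis (e₁, e₂) of H one has ‖v‖² · √( Σ_{i,j=1}^{2} A(eᵢ, eⱼ)² ) = -√2 · A(v, Jv). -/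
open scoped RealInnerProductSpace

/-- On a two-dimensional real inner product space `H` with a compatible complex
structure `J` and a symmetric bilinear form `A` of type (2,0)+(0,2), if `v ≠ 0`,
`A(v,v) = 0` and `A(v, Jv) ≤ 0`, then `‖v‖² |A| = -√2 A(v, Jv)`, where
`|A| = √(Σ_{i,j} A(eᵢ, eⱼ)²)` for any orthonormal basis `(e₁, e₂)`. -/
theorem stmt5 {H : Type*} [NormedAddCommGroup H] [InnerProductSpace ℝ H]
    (hdim : Module.finrank ℝ H = 2)
    (J : H →ₗ[ℝ] H) (hJiso : ∀ x : H, ‖J x‖ = ‖x‖) (hJJ : ∀ x : H, J (J x) = -x)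
    (A : H →ₗ[ℝ] H →ₗ[ℝ] ℝ) (hAsym : ∀ X Y : H, A X Y = A Y X)
    (hAJ : ∀ X Y : H, A (J X) (J Y) = - A X Y)
    (v : H) (hv : v ≠ 0) (hAv : A v v = 0) (hAvJv : A v (J v) ≤ 0)
    (b : OrthonormalBasis (Fin 2) ℝ H) :
    ‖v‖ ^ 2 * Real.sqrt (∑ i : Fin 2, ∑ j : Fin 2, (A (b i) (b j)) ^ 2) =
      - Real.sqrt 2 * A v (J v) := by
  -- J preserves inner products
  have hJinner : ∀ x y : H, ⟪J x, J y⟫ = ⟪x, y⟫ := by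
    intro x y
    rw [real_inner_eq_norm_add_mul_self_sub_norm_mul_self_sub_norm_mul_self_div_two,
      real_inner_eq_norm_add_mul_self_sub_norm_mul_self_sub_norm_mul_self_div_two x y,
      ← map_add, hJiso, hJiso, hJiso]
  have hnv : ‖v‖ ≠ 0 := norm_ne_zero_iff.mpr hv
  -- the adapted orthonormal basis
  set u0 : H := ‖v‖⁻¹ • v with hu0
  set u1 : H := J u0 with hu1
  have hnu0 : ‖u0‖ = 1 := by
    rw [hu0, norm_smul, norm_inv, norm_norm, inv_mul_cancel₀ hnv]
  have hinner00 : ⟪u0, u0⟫ = 1 := by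
    rw [real_inner_self_eq_norm_sq, hnu0]; norm_num
  have hinner11 : ⟪u1, u1⟫ = 1 := by rw [hu1, hJinner]; exact hinner00
  have hinner01 : ⟪u0, u1⟫ = 0 := by
    have h1 : ⟪J u0, J u1⟫ = ⟪u0, u1⟫ := hJinner _ _
    rw [hu1, hJJ, inner_neg_right, real_inner_comm] at h1
    rw [← hu1] at h1
    linarith
  have hinner10 : ⟪u1, u0⟫ = 0 := by rw [real_inner_comm]; exact hinner01
  -- expansion of any vector
  have hexp : ∀ x : H, x = ⟪u0, x⟫ • u0 + ⟪u1, x⟫ • u1 := by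
    intro x
    have horth : Orthonormal ℝ ![u0, u1] := by
      rw [orthonormal_iff_ite]
      intro i j
      fin_cases i <;> fin_cases j <;>
        simp [hinner00, hinner01, hinner10, hinner11, hnu0, show ‖u1‖ = 1 from by rw [hu1, hJiso, hnu0]]
    have hcard : Fintype.card (Fin 2) = Module.finrank ℝ H := by simp [hdim]
    let B : Module.Basis (Fin 2) ℝ H := basisOfOrthonormalOfCardEqFinrank horth hcard
    have hB : ⇑B = ![u0, u1] := coe_basisOfOrthonormalOfCardEqFinrank horth hcard
    have horthB : Orthonormal ℝ B := by rw [hB]; exact horth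
    let ob : OrthonormalBasis (Fin 2) ℝ H := B.toOrthonormalBasis horthB
    have hob : ⇑ob = ![u0, u1] := by
      rw [show ⇑ob = ⇑B from B.coe_toOrthonormalBasis horthB, hB]
    have := ob.sum_repr' x
    rw [Fin.sum_univ_two] at this
    simp only [hob] at this
    simpa using this.symm
  -- values of A on the adapted basis
  set a : ℝ := A u0 u1 with ha
  have hA00 : A u0 u0 = 0 := by
    rw [hu0]
    simp [hAv]
  have hA11 : A u1 u1 = 0 := by rw [hu1, hAJ, hA00, neg_zero]
  have hA10 : A u1 u0 = a := by rw [hAsym]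
  have hAxy : ∀ x y : H, A x y =
      a * (⟪u0, x⟫ * ⟪u1, y⟫ + ⟪u1, x⟫ * ⟪u0, y⟫) := by
    intro x y
    conv_lhs => rw [hexp x, hexp y]
    simp only [map_add, map_smul, LinearMap.add_apply, LinearMap.smul_apply,
      smul_eq_mul, hA00, hA11, hA10, ← ha]
    ring
  -- Parseval identities
  have hpar : ∀ x y : H, ∑ i : Fin 2, ⟪x, b i⟫ * ⟪b i, y⟫ = ⟪x, y⟫ := fun x y =>
    b.sum_inner_mul_inner x y
  have hc2 : ⟪u0, b 0⟫ ^ 2 + ⟪u0, b 1⟫ ^ 2 = 1 := by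
    have := hpar u0 u0
    rw [Fin.sum_univ_two] at this
    rw [real_inner_comm u0 (b 0), real_inner_comm u0 (b 1)] at this
    nlinarith [this, hinner00]
  have hd2 : ⟪u1, b 0⟫ ^ 2 + ⟪u1, b 1⟫ ^ 2 = 1 := by
    have := hpar u1 u1
    rw [Fin.sum_univ_two] at this
    rw [real_inner_comm u1 (b 0), real_inner_comm u1 (b 1)] at this
    nlinarith [this, hinner11]
  have hcd : ⟪u0, b 0⟫ * ⟪u1, b 0⟫ + ⟪u0, b 1⟫ * ⟪u1, b 1⟫ = 0 := by
    have := hpar u0 u1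
    rw [Fin.sum_univ_two] at this
    rw [real_inner_comm u1 (b 0), real_inner_comm u1 (b 1)] at this
    rw [hinner01] at this
    linarith
  -- the sum equals 2a²
  have hsum : ∑ i : Fin 2, ∑ j : Fin 2, (A (b i) (b j)) ^ 2 = 2 * a ^ 2 := by
    simp only [Fin.sum_univ_two, hAxy]
    linear_combination (2 * a ^ 2 * (⟪u1, b 0⟫ ^ 2 + ⟪u1, b 1⟫ ^ 2)) * hc2 +
      2 * a ^ 2 * hd2 + 2 * a ^ 2 * (⟪u0, b 0⟫ * ⟪u1, b 0⟫ + ⟪u0, b 1⟫ * ⟪u1, b 1⟫) * hcd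
  -- a in terms of A v (J v)
  have hu1' : u1 = ‖v‖⁻¹ • J v := by rw [hu1, hu0, map_smul]
  have hav : A v (J v) = ‖v‖ ^ 2 * a := by
    rw [ha, hu0, hu1']
    simp only [map_smul, LinearMap.smul_apply, smul_eq_mul]
    field_simp
  have hanonpos : a ≤ 0 := by
    have h2 : (0:ℝ) < ‖v‖ ^ 2 := by positivity
    nlinarith [hAvJv, hav]
  rw [hsum, hav]
  have : Real.sqrt (2 * a ^ 2) = Real.sqrt 2 * (-a) := by
    rw [Real.sqrt_mul (by norm_num : (0:ℝ) ≤ 2), Real.sqrt_sq_eq_abs,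
      abs_of_nonpos hanonpos]
  rw [this]
  ring
end
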